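/- Let G be a connected finite simple graph of order n and even diameter d ≥ 4. Then ξ^c(G) ≥ nd + n + d²/2 − 2d − 1; equivalently, ξ^c(G) ≥ ξ^c(V_{n,d}) where V_{n,d} is the volcano graph of order n and diameter d. -/

import Mathlib

/-- The eccentricity of a vertex `v` in a finite graph `G`:
the maximum distance from `v` to any vertex of `G`. -/
noncomputable def SimpleGraph.ecc {V : Type*} [Fintype V] (G : SimpleGraph V) (v : V) : ℕ :=
  Finset.univ.sup fun u => G.dist v u

/-- The eccentric connectivity index of a finite graph `G`:
`ξ^c(G) = ∑_{v ∈ V(G)} ε(v) · d(v)`. -/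
noncomputable def SimpleGraph.eci {V : Type*} [Fintype V] (G : SimpleGraph V) : ℕ :=
  ∑ v, G.ecc v * Nat.card (G.neighborSet v)

open Finset SimpleGraph

/-- If `dist x v = k+1`, there is a neighbor of `v` at distance `k` from `x`. -/
lemma aux_parent {V : Type*} {G : SimpleGraph V} (hG : G.Connected) {x v : V} {k : ℕ}
    (h : G.dist x v = k + 1) : ∃ u, G.Adj u v ∧ G.dist x u = k := by
  obtain ⟨p, hp⟩ := hG.exists_walk_length_eq_dist x v
  have hnn : ¬ p.reverse.Nil := by
    rw [SimpleGraph.Walk.nil_iff_length_eq, SimpleGraph.Walk.length_reverse, hp, h]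
    omega
  obtain ⟨u, hadj, q, hq⟩ := SimpleGraph.Walk.not_nil_iff.mp hnn
  refine ⟨u, hadj.symm, ?_⟩
  have hlen : q.length = k := by
    have h2 := congrArg SimpleGraph.Walk.length hq
    rw [SimpleGraph.Walk.length_reverse, hp, h] at h2
    simp only [SimpleGraph.Walk.length_cons] at h2
    omega
  have h1 : G.dist x u ≤ k := by
    have := SimpleGraph.dist_le q.reverse
    rwa [SimpleGraph.Walk.length_reverse, hlen] at this
  have h3 : G.dist u v ≤ 1 := by
    have := SimpleGraph.dist_le hadj.symm.toWalk
    simpa [SimpleGraph.Adj.toWalk] using this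
  have h4 : G.dist x v ≤ G.dist x u + G.dist u v := hG.dist_triangle
  omega

/-- All levels below an attained distance are attained. -/
lemma aux_level {V : Type*} {G : SimpleGraph V} (hG : G.Connected) (x : V) :
    ∀ j, (∃ v, G.dist x v = j) → ∀ i, i ≤ j → ∃ u, G.dist x u = i := by
  intro j
  induction j with
  | zero =>
    rintro ⟨v, hv⟩ i hi
    exact ⟨x, by simpa [Nat.le_zero.mp hi] using SimpleGraph.dist_self (G := G) (v := x)⟩
  | succ j ih =>
    rintro ⟨v, hv⟩ i hi
    rcases Nat.eq_or_lt_of_le hi with h | h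
    · exact ⟨v, by omega⟩
    · obtain ⟨u, _, hu⟩ := aux_parent hG hv
      exact ih ⟨u, hu⟩ i (by omega)

lemma aux_arith (S M : ℕ) (h : 2 * S + M = M * M) :
    2 * S + M * (2 * M + 1) + (2 * S + M * (2 * M + 1)) = 6 * M ^ 2 := by nlinarith [h]

set_option maxHeartbeats 1000000 in
/-- Let `G` be a connected graph of order `n` and even diameter `d ≥ 4`.  Then
`ξ^c(G) ≥ nd + n + d²/2 − 2d − 1 = ξ^c(V_{n,d})`. -/
theorem eci_lower_bound_even {V : Type*} [Fintype V]
    (G : SimpleGraph V) (hG : G.Connected) (n d : ℕ)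
    (hn : Fintype.card V = n) (hdiam : G.diam = d) (hde : Even d) (hd4 : 4 ≤ d) :
    (G.eci : ℚ) ≥ n * d + n + d ^ 2 / 2 - 2 * d - 1 := by

  classical
  obtain ⟨m, hm⟩ : ∃ m, d = 2 * m := by
    obtain ⟨r, hr⟩ := hde; exact ⟨r, by omega⟩
  have hmem : 2 ≤ m := by omega
  have hne : Nonempty V := hG.nonempty
  obtain ⟨x, y, hxy⟩ := SimpleGraph.exists_dist_eq_diam (G := G)
  rw [hdiam] at hxy
  have hdnz : G.diam ≠ 0 := by omega
  have hetop : G.ediam ≠ ⊤ := SimpleGraph.ediam_ne_top_of_diam_ne_zero hdnz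
  -- levels
  set L : V → ℕ := fun v => G.dist x v with hL
  have hLle : ∀ v, L v ≤ d := fun v => by
    have := SimpleGraph.dist_le_diam (G := G) hetop (u := x) (v := v)
    simpa [hdiam] using this
  have hLpos : ∀ v, v ≠ x → 1 ≤ L v :=
    fun v hv => hG.pos_dist_of_ne (fun h => hv h.symm)
  -- eccentricity lower bounds
  have hecc : ∀ v, max (L v) (d - L v) ≤ G.ecc v := by
    intro v
    have h1 : L v ≤ G.ecc v := by
      have : G.dist v x ≤ G.ecc v := Finset.le_sup (Finset.mem_univ x)
      rwa [SimpleGraph.dist_comm] at this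
    have h2 : d - L v ≤ G.ecc v := by
      have h3 : G.dist v y ≤ G.ecc v := Finset.le_sup (Finset.mem_univ y)
      have h4 : G.dist x y ≤ G.dist x v + G.dist v y := hG.dist_triangle
      have h5 : L v = G.dist x v := rfl
      omega
    omega
  -- parent function
  have hpar : ∀ v : V, ∃ u, v ≠ x → (G.Adj u v ∧ G.dist x u + 1 = G.dist x v) := by
    intro v
    by_cases hv : v = x
    · exact ⟨x, fun h => absurd hv h⟩
    · have h1 : 1 ≤ G.dist x v := hLpos v hv
      obtain ⟨k, hk⟩ : ∃ k, G.dist x v = k + 1 := ⟨G.dist x v - 1, by omega⟩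
      obtain ⟨u, hu1, hu2⟩ := aux_parent hG hk
      exact ⟨u, fun _ => ⟨hu1, by omega⟩⟩
  choose p hp using hpar
  have hpadj : ∀ v, v ≠ x → G.Adj (p v) v := fun v hv => (hp v hv).1
  have hpL : ∀ v, v ≠ x → L (p v) + 1 = L v := fun v hv => (hp v hv).2
  -- children sets
  set C : V → Finset V := fun u => Finset.univ.filter (fun v => v ≠ x ∧ p v = u) with hC
  -- degree bound
  have hdeg : ∀ u, (C u).card + (if u = x then 0 else 1) ≤ G.degree u := by
    intro u
    by_cases hu : u = x
    · subst hu
      simp only [if_pos rfl, add_zero]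
      have hsub : C u ⊆ G.neighborFinset u := by
        intro v hv
        simp only [hC, Finset.mem_filter] at hv
        rw [SimpleGraph.mem_neighborFinset]
        have h5 : G.Adj (p v) v := hpadj v hv.2.1
        rwa [hv.2.2] at h5
      have := Finset.card_le_card hsub
      rwa [SimpleGraph.card_neighborFinset_eq_degree] at this
    · rw [if_neg hu]
      have hnotmem : p u ∉ C u := by
        simp only [hC, Finset.mem_filter]
        rintro ⟨-, hpu, hppu⟩
        have h1 := hpL u hu
        have h2 := hpL (p u) hpu
        rw [hppu] at h2
        omega
      have hsub : insert (p u) (C u) ⊆ G.neighborFinset u := by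
        intro v hv
        rcases Finset.mem_insert.mp hv with h | h
        · rw [h, SimpleGraph.mem_neighborFinset]
          exact (hpadj u hu).symm
        · simp only [hC, Finset.mem_filter] at h
          rw [SimpleGraph.mem_neighborFinset]
          have h5 : G.Adj (p v) v := hpadj v h.2.1
          rwa [h.2.2] at h5
      have := Finset.card_le_card hsub
      rwa [Finset.card_insert_of_notMem hnotmem, SimpleGraph.card_neighborFinset_eq_degree] at this
  -- rewrite eci with degrees
  have heci : G.eci = ∑ v, G.ecc v * G.degree v := by
    unfold SimpleGraph.eci
    refine Finset.sum_congr rfl fun v _ => ?_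
    rw [Nat.card_eq_fintype_card, SimpleGraph.card_neighborSet_eq_degree]
  set s : Finset V := Finset.univ.filter (fun v => v ≠ x) with hs
  -- step 1
  have step1 : ∑ v ∈ s, (G.ecc (p v) + G.ecc v) ≤ G.eci := by
    have e1 : ∑ u, G.ecc u * (C u).card = ∑ v ∈ s, G.ecc (p v) := by
      have := Finset.sum_fiberwise_of_maps_to (g := p) (t := (Finset.univ : Finset V))
        (fun v (_ : v ∈ s) => Finset.mem_univ (p v)) (fun v => G.ecc (p v))
      rw [← this]
      refine Finset.sum_congr rfl fun u _ => ?_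
      have hfe : s.filter (fun v => p v = u) = C u := by
        simp only [hs, hC, Finset.filter_filter]
      rw [hfe]
      rw [Finset.sum_congr rfl (fun v hv => by
        simp only [hC, Finset.mem_filter] at hv
        rw [hv.2.2])]
      rw [Finset.sum_const, smul_eq_mul, mul_comm]
    have e2 : ∑ u, G.ecc u * (if u = x then 0 else 1) = ∑ v ∈ s, G.ecc v := by
      rw [hs, Finset.sum_filter]
      refine Finset.sum_congr rfl fun u _ => ?_
      by_cases hu : u = x <;> simp [hu]
    calc ∑ v ∈ s, (G.ecc (p v) + G.ecc v)
        = ∑ u, G.ecc u * (C u).card + ∑ u, G.ecc u * (if u = x then 0 else 1) := by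
          rw [e1, e2, Finset.sum_add_distrib]
      _ = ∑ u, G.ecc u * ((C u).card + (if u = x then 0 else 1)) := by
          rw [← Finset.sum_add_distrib]
          exact Finset.sum_congr rfl fun u _ => (Nat.mul_add _ _ _).symm
      _ ≤ ∑ u, G.ecc u * G.degree u :=
          Finset.sum_le_sum fun u _ => Nat.mul_le_mul_left _ (hdeg u)
      _ = G.eci := heci.symm
  -- step 2 : pointwise bound
  set F : ℕ → ℕ := fun k => max (k - 1) (d - (k - 1)) + max k (d - k) with hF
  have step2 : ∑ v ∈ s, F (L v) ≤ ∑ v ∈ s, (G.ecc (p v) + G.ecc v) := by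
    refine Finset.sum_le_sum fun v hv => ?_
    have hvx : v ≠ x := by simpa [hs] using hv
    have h1 := hecc (p v)
    have h2 := hecc v
    have h3 := hpL v hvx
    have h4 : L (p v) = L v - 1 := by omega
    rw [h4] at h1
    exact Nat.add_le_add h1 h2
  -- representatives of levels
  have hrep : ∀ i, i ≤ d → ∃ u, L u = i := by
    intro i hi
    exact aux_level hG x d ⟨y, hxy⟩ i hi
  have hrep' : ∀ i ∈ Finset.Icc 1 d, ∃ u, L u = i := fun i hi =>
    hrep i (Finset.mem_Icc.mp hi).2
  choose rep hrepL using hrep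
  set t : Finset V := (Finset.Icc 1 d).attach.image (fun i => rep i.1 (Finset.mem_Icc.mp i.2).2)
    with ht
  have hLt : ∀ v ∈ t, 1 ≤ L v ∧ L v ≤ d ∧ v ≠ x := by
    intro v hv
    rw [ht, Finset.mem_image] at hv
    obtain ⟨i, hi, hiv⟩ := hv
    have := hrepL i.1 (Finset.mem_Icc.mp i.2).2
    rw [hiv] at this
    have hi1 : 1 ≤ i.1 := (Finset.mem_Icc.mp i.2).1
    have hi2 : i.1 ≤ d := (Finset.mem_Icc.mp i.2).2
    refine ⟨by omega, by omega, fun hvx => ?_⟩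
    rw [hvx] at this
    have : L x = 0 := SimpleGraph.dist_self (G := G)
    omega
  -- canonical representative function
  set rep' : ℕ → V := fun i => if h : i ≤ d then rep i h else x with hrep'
  have hLrep' : ∀ i, i ≤ d → L (rep' i) = i := by
    intro i hi
    rw [hrep']
    simp only [dif_pos hi]
    exact hrepL i hi
  set t : Finset V := (Finset.Icc 1 d).image rep' with ht
  have hinj : ∀ a ∈ Finset.Icc 1 d, ∀ b ∈ Finset.Icc 1 d, rep' a = rep' b → a = b := by
    intro a ha b hb hab
    have h1 := hLrep' a (Finset.mem_Icc.mp ha).2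
    have h2 := hLrep' b (Finset.mem_Icc.mp hb).2
    rw [hab] at h1
    omega
  have hts : t ⊆ s := by
    intro v hv
    rw [ht, Finset.mem_image] at hv
    obtain ⟨i, hi, hiv⟩ := hv
    have h1 := hLrep' i (Finset.mem_Icc.mp hi).2
    have h2 := (Finset.mem_Icc.mp hi).1
    rw [hiv] at h1
    have hLx : L x = 0 := SimpleGraph.dist_self (G := G)
    rw [hs, Finset.mem_filter]
    exact ⟨Finset.mem_univ v, fun hvx => by rw [hvx] at h1; omega⟩
  have hcardt : t.card = d := by
    rw [ht, Finset.card_image_of_injOn hinj, Nat.card_Icc]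
    omega
  have hcards : s.card = Fintype.card V - 1 := by
    rw [hs, Finset.filter_ne', Finset.card_erase_of_mem (Finset.mem_univ x),
      Finset.card_univ]
  have hNd : d + 1 ≤ Fintype.card V := by
    have h1 := Finset.card_le_card hts
    have h2 : 1 ≤ Fintype.card V := Fintype.card_pos
    omega
  -- each F value on [1,d] is at least d+1
  have hFge : ∀ i, 1 ≤ i → i ≤ d → d + 1 ≤ F i := by
    intro i h1 h2
    have hFi : F i = max (i - 1) (d - (i - 1)) + max i (d - i) := rfl
    rw [hFi]
    rcases max_choice (i - 1) (d - (i - 1)) with h3 | h3 <;>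
      rcases max_choice i (d - i) with h4 | h4 <;> omega
  -- step 3 : sum over s is at least sum over levels plus rest
  have step3 : ∑ i ∈ Finset.Icc 1 d, F i + (Fintype.card V - 1 - d) * (d + 1)
      ≤ ∑ v ∈ s, F (L v) := by
    rw [← Finset.sum_sdiff hts]
    have hA : ∑ i ∈ Finset.Icc 1 d, F i = ∑ v ∈ t, F (L v) := by
      rw [ht, Finset.sum_image hinj]
      exact Finset.sum_congr rfl fun i hi => by
        rw [hLrep' i (Finset.mem_Icc.mp hi).2]
    have hB : (Fintype.card V - 1 - d) * (d + 1) ≤ ∑ v ∈ s \ t, F (L v) := by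
      have hcard : (s \ t).card = Fintype.card V - 1 - d := by
        rw [Finset.card_sdiff_of_subset hts, hcardt, hcards]
      have := Finset.card_nsmul_le_sum (s \ t) (fun v => F (L v)) (d + 1)
        (fun v hv => by
          have hvs := (Finset.mem_sdiff.mp hv).1
          have hvx : v ≠ x := by
            rw [hs, Finset.mem_filter] at hvs
            exact hvs.2
          exact hFge (L v) (hLpos v hvx) (hLle v))
      rw [smul_eq_mul, hcard] at this
      omega
    omega
  -- the exact value of the level sum
  have hFsum : ∑ i ∈ Finset.Icc 1 d, F i = 6 * m ^ 2 := by
    have hIcc : Finset.Icc 1 d = Finset.Ioc 0 d := by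
      ext a
      simp only [Finset.mem_Icc, Finset.mem_Ioc]
      omega
    have hsplit : ∑ i ∈ Finset.Ioc 0 m, F i + ∑ i ∈ Finset.Ioc m d, F i
        = ∑ i ∈ Finset.Ioc 0 d, F i :=
      Finset.sum_Ioc_consecutive F (Nat.zero_le m) (by omega)
    have him1 : Finset.Ioc 0 m = (Finset.range m).image (fun j => j + 1) := by
      ext a
      simp only [Finset.mem_Ioc, Finset.mem_image, Finset.mem_range]
      constructor
      · rintro ⟨h1, h2⟩; exact ⟨a - 1, by omega, by omega⟩
      · rintro ⟨j, hj, rfl⟩; omega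
    have him2 : Finset.Ioc m d = (Finset.range m).image (fun j => m + 1 + j) := by
      ext a
      simp only [Finset.mem_Ioc, Finset.mem_image, Finset.mem_range]
      constructor
      · rintro ⟨h1, h2⟩; exact ⟨a - m - 1, by omega, by omega⟩
      · rintro ⟨j, hj, rfl⟩; omega
    have hS1 : ∑ i ∈ Finset.Ioc 0 m, F i
        = ∑ j ∈ Finset.range m, (2 * (m - 1 - j) + (2 * m + 1)) := by
      rw [him1, Finset.sum_image (by intro a _ b _ h; simp only at h; omega)]
      refine Finset.sum_congr rfl fun j hj => ?_
      rw [Finset.mem_range] at hj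
      have e1 : F (j + 1) = (d - j) + (d - (j + 1)) := by
        have hFi : F (j + 1) = max (j + 1 - 1) (d - (j + 1 - 1)) + max (j + 1) (d - (j + 1)) := rfl
        rw [hFi]
        simp only [Nat.add_sub_cancel]
        rw [max_eq_right (by omega), max_eq_right (by omega)]
      omega
    have hS2 : ∑ i ∈ Finset.Ioc m d, F i
        = ∑ j ∈ Finset.range m, (2 * j + (2 * m + 1)) := by
      rw [him2, Finset.sum_image (by intro a _ b _ h; simp only at h; omega)]
      refine Finset.sum_congr rfl fun j hj => ?_
      rw [Finset.mem_range] at hj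
      have e1 : F (m + 1 + j) = (m + j) + (m + 1 + j) := by
        have hFi : F (m + 1 + j) = max (m + 1 + j - 1) (d - (m + 1 + j - 1)) + max (m + 1 + j) (d - (m + 1 + j)) := rfl
        rw [hFi]
        have e2 : m + 1 + j - 1 = m + j := by omega
        rw [e2, max_eq_left (by omega), max_eq_left (by omega)]
      omega
    have hrefl : ∑ j ∈ Finset.range m, (m - 1 - j) = ∑ j ∈ Finset.range m, j :=
      Finset.sum_range_reflect (fun j => j) m
    have hgauss := Finset.sum_range_id_mul_two m
    have ha : ∑ j ∈ Finset.range m, (2 * (m - 1 - j) + (2 * m + 1))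
        = 2 * (∑ j ∈ Finset.range m, j) + m * (2 * m + 1) := by
      rw [Finset.sum_add_distrib, ← Finset.mul_sum, hrefl, Finset.sum_const,
        Finset.card_range, smul_eq_mul]
    have hb : ∑ j ∈ Finset.range m, (2 * j + (2 * m + 1))
        = 2 * (∑ j ∈ Finset.range m, j) + m * (2 * m + 1) := by
      rw [Finset.sum_add_distrib, ← Finset.mul_sum, Finset.sum_const,
        Finset.card_range, smul_eq_mul]
    have hS : 2 * (∑ j ∈ Finset.range m, j) + m = m * m := by
      have hmm2 : m * (m - 1) + m = m * m := by
        obtain ⟨k, rfl⟩ : ∃ k, m = k + 1 := ⟨m - 1, by omega⟩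
        simp only [Nat.add_sub_cancel]
        ring
      omega
    rw [hIcc, ← hsplit, hS1, hS2, ha, hb]
    exact aux_arith _ m hS
  -- the main natural-number inequality
  have main : 6 * m ^ 2 + (Fintype.card V - 1 - d) * (d + 1) ≤ G.eci := by
    calc 6 * m ^ 2 + (Fintype.card V - 1 - d) * (d + 1)
        = ∑ i ∈ Finset.Icc 1 d, F i + (Fintype.card V - 1 - d) * (d + 1) := by rw [hFsum]
      _ ≤ ∑ v ∈ s, F (L v) := step3
      _ ≤ ∑ v ∈ s, (G.ecc (p v) + G.ecc v) := step2
      _ ≤ G.eci := step1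
  -- conclude over ℚ
  have hcast : ((6 * m ^ 2 + (Fintype.card V - 1 - d) * (d + 1) : ℕ) : ℚ)
      = 6 * (m : ℚ) ^ 2 + ((n : ℚ) - 1 - d) * (d + 1) := by
    have h1 : (((Fintype.card V - 1 - d : ℕ)) : ℚ) = (n : ℚ) - 1 - (d : ℚ) := by
      have h2 : Fintype.card V - 1 - d = n - (1 + d) := by omega
      rw [h2, Nat.cast_sub (by omega)]
      push_cast
      ring
    push_cast [h1]
    ring
  have hfin : ((G.eci : ℕ) : ℚ) ≥ 6 * (m : ℚ) ^ 2 + ((n : ℚ) - 1 - d) * (d + 1) := by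
    rw [← hcast]
    exact_mod_cast main
  have hdq : (d : ℚ) = 2 * m := by exact_mod_cast hm
  rw [hdq] at hfin ⊢
  nlinarith [hfin]
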